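/- arXiv:2004.05414 — 2 statements merged into one kernel-verified Lean document; each statement's English description precedes it below -/
import Mathlib

section
/- Suppose P(τ_1 ≤ t) = A t^p e^{−C/t}(1 + o(1)) as t → 0+ with C > 0, A > 0, p ∈ ℝ, for an iid sequence {τ_n} of nonnegative random variables. Let T_N = min{τ_1,...,τ_N}, a_N = C/(ln N)^2, and b_N = C/ln N + C p ln(ln N)/(ln N)^2 − C ln(A C^p)/(ln N)^2. Then (T_N − b_N)/a_N converges in distribution as N → ∞ to the Gumbel(0,1) law with survival function exp(−e^x). -/
open MeasureTheory ProbabilityTheory Real Filter Topology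
open ENNReal
set_option maxHeartbeats 1000000


lemma pow_lim (q : ℕ → ℝ) (c : ℝ)
    (h : Tendsto (fun N : ℕ => (N : ℝ) * q N) atTop (𝓝 c))
    (hq1 : Tendsto q atTop (𝓝 0))
    (hqpos : ∀ᶠ N in atTop, 0 < q N) :
    Tendsto (fun N : ℕ => (1 - q N) ^ N) atTop (𝓝 (Real.exp (-c))) := by
  have hd : HasDerivAt (fun h : ℝ => Real.log (1 - h)) (-1) 0 := by
    have h1 : HasDerivAt (fun h : ℝ => 1 - h) (-1) 0 := by
      exact (hasDerivAt_id' 0).const_sub 1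
    have h2 : HasDerivAt Real.log 1 ((fun h : ℝ => 1 - h) 0) := by
      simpa using Real.hasDerivAt_log (by norm_num : ((1:ℝ) - 0) ≠ 0)
    have h3 := h2.comp 0 h1
    rw [one_mul] at h3
    exact h3
  have hslope : Tendsto (fun h : ℝ => Real.log (1 - h) / h) (𝓝[≠] (0:ℝ)) (𝓝 (-1)) := by
    have := hasDerivAt_iff_tendsto_slope.mp hd
    refine this.congr fun y => ?_
    simp [slope_def_field, div_eq_inv_mul]
  have hq0' : Tendsto q atTop (𝓝[≠] (0:ℝ)) := by
    rw [tendsto_nhdsWithin_iff]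
    exact ⟨hq1, hqpos.mono fun N hN => ne_of_gt hN⟩
  have hmul : Tendsto (fun N : ℕ => (N : ℝ) * q N * (Real.log (1 - q N) / q N)) atTop
      (𝓝 (c * (-1))) := h.mul (hslope.comp hq0')
  have hlog : Tendsto (fun N : ℕ => (N : ℝ) * Real.log (1 - q N)) atTop (𝓝 (-c)) := by
    rw [show -c = c * (-1) by ring]
    refine hmul.congr' ?_
    filter_upwards [hqpos] with N hN
    field_simp
  have hexp : Tendsto (fun N : ℕ => Real.exp ((N : ℝ) * Real.log (1 - q N))) atTop
      (𝓝 (Real.exp (-c))) := (Real.continuous_exp.tendsto _).comp hlog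
  refine hexp.congr' ?_
  filter_upwards [hq1.eventually (eventually_lt_nhds (by norm_num : (0:ℝ) < 1))] with N hN
  rw [Real.exp_nat_mul, Real.exp_log (by linarith)]
open MeasureTheory ProbabilityTheory Real Filter Topology

lemma aux_main (A C p x : ℝ) (hA : 0 < A) (hC : 0 < C) :
    Tendsto (fun L : ℝ => C / L + C * p * Real.log L / L ^ 2
        - C * Real.log (A * C ^ p) / L ^ 2 + C * x / L ^ 2) atTop (𝓝[>] 0) ∧
    Tendsto (fun L : ℝ => Real.exp L *
        (A * (C / L + C * p * Real.log L / L ^ 2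
          - C * Real.log (A * C ^ p) / L ^ 2 + C * x / L ^ 2) ^ p *
          Real.exp (-C / (C / L + C * p * Real.log L / L ^ 2
          - C * Real.log (A * C ^ p) / L ^ 2 + C * x / L ^ 2)))) atTop
      (𝓝 (Real.exp x)) := by
  set K : ℝ := Real.log (A * C ^ p) with hKdef
  have hK : K = Real.log A + p * Real.log C := by
    rw [hKdef, Real.log_mul (ne_of_gt hA) (ne_of_gt (Real.rpow_pos_of_pos hC p)),
      Real.log_rpow hC]
  set t : ℝ → ℝ := fun L => C / L + C * p * Real.log L / L ^ 2 - C * K / L ^ 2 + C * x / L ^ 2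
    with htdef
  set δ : ℝ → ℝ := fun L => p * Real.log L - K + x with hδdef
  set ε : ℝ → ℝ := fun L => δ L / L with hεdef
  -- basic limits
  have hlogdiv : Tendsto (fun L : ℝ => Real.log L / L) atTop (𝓝 0) := by
    simpa using Real.tendsto_pow_log_div_mul_add_atTop 1 0 1 one_ne_zero
  have hlogsqdiv : Tendsto (fun L : ℝ => (Real.log L) ^ 2 / L) atTop (𝓝 0) := by
    simpa using Real.tendsto_pow_log_div_mul_add_atTop 1 0 2 one_ne_zero
  have hinv : Tendsto (fun L : ℝ => 1 / L) atTop (𝓝 0) := by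
    simpa [one_div] using (tendsto_inv_atTop_zero : Tendsto (fun r : ℝ => r⁻¹) atTop (𝓝 0))
  have hε0 : Tendsto ε atTop (𝓝 0) := by
    have : Tendsto (fun L : ℝ => p * (Real.log L / L) + (x - K) * (1 / L)) atTop
        (𝓝 (p * 0 + (x - K) * 0)) := (hlogdiv.const_mul p).add (hinv.const_mul (x - K))
    simp only [mul_zero, add_zero] at this
    refine this.congr' ?_
    filter_upwards [eventually_ne_atTop (0:ℝ)] with L hL
    simp only [hεdef, hδdef]
    field_simp
    ring
  -- eventual facts
  have hev : ∀ᶠ L in atTop, t L = (C / L) * (1 + ε L) ∧ 0 < L ∧ 0 < 1 + ε L := by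
    filter_upwards [eventually_gt_atTop (0:ℝ),
      hε0.eventually (eventually_gt_nhds (by norm_num : (-1/2 : ℝ) < 0))] with L hL hεL
    refine ⟨?_, hL, by linarith⟩
    simp only [htdef, hεdef, hδdef]
    field_simp
    ring
  have hpos : ∀ᶠ L in atTop, 0 < t L := by
    filter_upwards [hev] with L ⟨h1, h2, h3⟩
    rw [h1]; positivity
  constructor
  · rw [tendsto_nhdsWithin_iff]
    constructor
    · have : Tendsto (fun L : ℝ => (C / L) * (1 + ε L)) atTop (𝓝 (0 * (1 + 0))) := by
        refine Tendsto.mul ?_ (tendsto_const_nhds.add hε0)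
        have h' := hinv.const_mul C
        rw [mul_zero] at h'
        exact h'.congr (fun L => (by ring : C * (1 / L) = C / L))
      simp only [zero_mul] at this
      exact this.congr' (by filter_upwards [hev] with L hL; exact hL.1.symm)
    · exact hpos
  · -- second part
    set g : ℝ → ℝ := fun L => Real.log A + p * Real.log C + p * Real.log (1 + ε L) +
      (x - K - p * (p * ((Real.log L) ^ 2 / L) + (x - K) * (Real.log L / L))) / (1 + ε L) with hgdef
    have hg : Tendsto g atTop (𝓝 (Real.log A + p * Real.log C + p * Real.log 1 +
        (x - K - p * (p * 0 + (x - K) * 0)) / (1 + 0))) := by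
      refine Tendsto.add (Tendsto.add tendsto_const_nhds ?_) (Tendsto.div ?_
        (tendsto_const_nhds.add hε0) (by norm_num))
      · refine Tendsto.const_mul p ?_
        have : Tendsto (fun L : ℝ => (1:ℝ) + ε L) atTop (𝓝 1) := by
          simpa using tendsto_const_nhds.add hε0
        exact ((Real.continuousAt_log one_ne_zero).tendsto.comp this)
      · exact tendsto_const_nhds.sub ((((hlogsqdiv.const_mul p)).add (hlogdiv.const_mul (x - K))).const_mul p)
    have hgx : Tendsto g atTop (𝓝 x) := by
      have hxval : Real.log A + p * Real.log C + p * Real.log 1 +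
          (x - K - p * (p * 0 + (x - K) * 0)) / (1 + 0) = x := by
        simp only [Real.log_one, hK, mul_zero, zero_mul, add_zero, sub_zero, div_one, mul_one]
        ring
      rwa [hxval] at hg
    have hexp : Tendsto (fun L => Real.exp (g L)) atTop (𝓝 (Real.exp x)) :=
      (Real.continuous_exp.tendsto _).comp hgx
    refine hexp.congr' ?_
    filter_upwards [hev, hpos, eventually_ne_atTop (0:ℝ)] with L ⟨heq, hL, hεL⟩ htL hLne
    have htLne : t L ≠ 0 := ne_of_gt htL
    have h1ε : (1:ℝ) + ε L ≠ 0 := ne_of_gt hεL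
    -- rewrite F L as exp of stuff
    have hFt : Real.exp L * (A * t L ^ p * Real.exp (-C / t L)) =
        Real.exp (L + Real.log A + p * Real.log (t L) + (-C / t L)) := by
      rw [Real.rpow_def_of_pos htL]
      rw [Real.exp_add, Real.exp_add, Real.exp_add, Real.exp_log hA]
      ring
    rw [hFt]
    congr 1
    -- now pure algebra/log identities
    have hlogt : Real.log (t L) = Real.log C - Real.log L + Real.log (1 + ε L) := by
      rw [heq, Real.log_mul (by positivity) h1ε, Real.log_div (ne_of_gt hC) hLne]
    have hCt : C / t L = L / (1 + ε L) := by
      rw [heq]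
      field_simp
    rw [hlogt, show -C / t L = -(C / t L) by ring, hgdef]
    beta_reduce
    rw [hCt]
    generalize Real.log (1 + ε L) = LG
    have hid : L * (1 + ε L) = L + δ L := by rw [hεdef]; field_simp
    have hδLpos : 0 < L + δ L := by rw [← hid]; positivity
    have h1εeq : 1 + ε L = (L + δ L) / L := by rw [hεdef]; field_simp
    rw [h1εeq]
    simp only [hδdef] at hδLpos ⊢
    have hδne : L + (p * Real.log L - K + x) ≠ 0 := ne_of_gt hδLpos
    field_simp
    ring

lemma min_prob_eq {Ω : Type*} [MeasureSpace Ω] [IsProbabilityMeasure (ℙ : Measure Ω)]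
    (τ : ℕ → Ω → ℝ)
    (hmeas : ∀ n, Measurable (τ n))
    (hindep : iIndepFun τ ℙ)
    (hident : ∀ n, Measure.map (τ n) ℙ = Measure.map (τ 0) ℙ)
    (N : ℕ) (hN1 : 1 ≤ N) (s : ℝ) :
    (ℙ {ω | (⨅ n : Fin N, τ n ω) ≤ s}).toReal
      = 1 - (1 - (ℙ {ω | τ 0 ω ≤ s}).toReal) ^ N := by
  have hIcap : {ω | (⨅ n : Fin N, τ n ω) ≤ s}ᶜ = ⋂ i ∈ Finset.range N, τ i ⁻¹' Set.Ioi s := by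
    haveI : Nonempty (Fin N) := Fin.pos_iff_nonempty.mp hN1
    ext ω
    simp only [Set.mem_compl_iff, Set.mem_setOf_eq, not_le, Set.mem_iInter, Set.mem_preimage,
      Set.mem_Ioi, Finset.mem_range]
    have hbdd : BddBelow (Set.range fun n : Fin N => τ n ω) := (Set.finite_range _).bddBelow
    constructor
    · intro h i hi
      exact lt_of_lt_of_le h (ciInf_le hbdd ⟨i, hi⟩)
    · intro h
      obtain ⟨n0, hn0⟩ := exists_eq_ciInf_of_finite (f := fun n : Fin N => τ n ω)
      rw [← hn0]
      exact h n0 n0.2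
  have hmeascap : MeasurableSet (⋂ i ∈ Finset.range N, τ i ⁻¹' Set.Ioi s) :=
    MeasurableSet.biInter (Finset.range N).countable_toSet
      fun i _ => (hmeas i) measurableSet_Ioi
  set a : ℝ≥0∞ := ℙ {ω | τ 0 ω ≤ s} with ha
  have hfac : ∀ i : ℕ, ℙ (τ i ⁻¹' Set.Ioi s) = 1 - a := by
    intro i
    have h1 : ℙ (τ i ⁻¹' Set.Ioi s) = ℙ (τ 0 ⁻¹' Set.Ioi s) := by
      rw [← Measure.map_apply (hmeas i) measurableSet_Ioi, hident i,
        Measure.map_apply (hmeas 0) measurableSet_Ioi]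
    have h2 : τ 0 ⁻¹' Set.Ioi s = (τ 0 ⁻¹' Set.Iic s)ᶜ := by
      rw [← Set.preimage_compl, Set.compl_Iic]
    have h3 : {ω | τ 0 ω ≤ s} = τ 0 ⁻¹' Set.Iic s := rfl
    rw [h1, h2, prob_compl_eq_one_sub ((hmeas 0) measurableSet_Iic), ha, h3]
  have hprod : ℙ (⋂ i ∈ Finset.range N, τ i ⁻¹' Set.Ioi s) = (1 - a) ^ N := by
    rw [hindep.meas_biInter (fun i _ => ⟨Set.Ioi s, measurableSet_Ioi, rfl⟩)]
    rw [Finset.prod_congr rfl (fun i _ => hfac i), Finset.prod_const, Finset.card_range]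
  have hcompl : {ω | (⨅ n : Fin N, τ n ω) ≤ s}
      = (⋂ i ∈ Finset.range N, τ i ⁻¹' Set.Ioi s)ᶜ := by
    rw [← hIcap, compl_compl]
  rw [hcompl, prob_compl_eq_one_sub hmeascap, hprod]
  have ha1 : a ≤ 1 := prob_le_one
  have hpow1 : (1 - a) ^ N ≤ 1 := pow_le_one' tsub_le_self N
  rw [ENNReal.toReal_sub_of_le hpow1 ENNReal.one_ne_top, ENNReal.toReal_pow,
    ENNReal.toReal_sub_of_le ha1 ENNReal.one_ne_top, ENNReal.toReal_one]

/-- Gumbel limit for the fastest FPT: if `P(τ ≤ t) ~ A t^p e^{−C/t}` as `t → 0+`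
with `C > 0`, `A > 0`, `p ∈ ℝ`, for an iid sequence of nonnegative random
variables, then with `a_N = C/(ln N)²` and
`b_N = C/ln N + C p ln(ln N)/(ln N)² − C ln(A C^p)/(ln N)²`, the rescaled minimum
`(T_N − b_N)/a_N` converges in distribution to the `Gumbel(0,1)` law with
survival function `exp(−e^x)` (whose CDF is continuous everywhere). -/
theorem min_iid_gumbel_limit
    {Ω : Type*} [MeasureSpace Ω] [IsProbabilityMeasure (ℙ : Measure Ω)]
    (τ : ℕ → Ω → ℝ)
    (hmeas : ∀ n, Measurable (τ n))
    (hnonneg : ∀ n ω, 0 ≤ τ n ω)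
    (hindep : iIndepFun τ ℙ)
    (hident : ∀ n, Measure.map (τ n) ℙ = Measure.map (τ 0) ℙ)
    (A C p : ℝ) (hA : 0 < A) (hC : 0 < C)
    (hshort : Tendsto
      (fun t : ℝ => (ℙ {ω | τ 0 ω ≤ t}).toReal / (A * t ^ p * Real.exp (-C / t)))
      (𝓝[>] (0 : ℝ)) (𝓝 1)) :
    ∀ x : ℝ,
      Tendsto
        (fun N : ℕ =>
          (ℙ {ω | ((⨅ n : Fin N, τ n ω) -
              (C / Real.log N + C * p * Real.log (Real.log N) / (Real.log N) ^ 2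
                - C * Real.log (A * C ^ p) / (Real.log N) ^ 2)) /
              (C / (Real.log N) ^ 2) ≤ x}).toReal)
        atTop (𝓝 (1 - Real.exp (-Real.exp x))) := by
  intro x
  obtain ⟨ht0, htF⟩ := aux_main A C p x hA hC
  set K : ℝ := Real.log (A * C ^ p) with hKdef
  set t : ℕ → ℝ := fun N => C / Real.log N + C * p * Real.log (Real.log N) / (Real.log N) ^ 2
    - C * K / (Real.log N) ^ 2 + C * x / (Real.log N) ^ 2 with htdef
  have hL : Tendsto (fun N : ℕ => Real.log N) atTop atTop :=
    Real.tendsto_log_atTop.comp tendsto_natCast_atTop_atTop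
  have htN : Tendsto t atTop (𝓝[>] (0:ℝ)) := ht0.comp hL
  set q : ℕ → ℝ := fun N => (ℙ {ω | τ 0 ω ≤ t N}).toReal with hqdef
  have hratio : Tendsto (fun N => q N / (A * t N ^ p * Real.exp (-C / t N))) atTop (𝓝 1) :=
    hshort.comp htN
  have hgN : Tendsto (fun N : ℕ => Real.exp (Real.log N) *
      (A * t N ^ p * Real.exp (-C / t N))) atTop (𝓝 (Real.exp x)) := htF.comp hL
  have htNpos : ∀ᶠ N : ℕ in atTop, 0 < t N := htN self_mem_nhdsWithin
  -- N * q N → exp x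
  have hNq : Tendsto (fun N : ℕ => (N : ℝ) * q N) atTop (𝓝 (Real.exp x)) := by
    have key : Tendsto (fun N : ℕ => q N / (A * t N ^ p * Real.exp (-C / t N)) *
        (Real.exp (Real.log N) * (A * t N ^ p * Real.exp (-C / t N)))) atTop
        (𝓝 (1 * Real.exp x)) := hratio.mul hgN
    rw [one_mul] at key
    refine key.congr' ?_
    filter_upwards [htNpos, eventually_ge_atTop 1] with N htp hN1
    have hgpos : 0 < A * t N ^ p * Real.exp (-C / t N) := by positivity
    have hNpos : (0:ℝ) < N := by exact_mod_cast hN1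
    rw [Real.exp_log hNpos]
    field_simp
  have hq0 : Tendsto q atTop (𝓝 0) := by
    have h2 : Tendsto (fun N : ℕ => ((N:ℝ) * q N) * (1 / N)) atTop (𝓝 (Real.exp x * 0)) :=
      hNq.mul tendsto_one_div_atTop_nhds_zero_nat
    rw [mul_zero] at h2
    refine h2.congr' ?_
    filter_upwards [eventually_ge_atTop 1] with N hN1
    have hNpos : (0:ℝ) < N := by exact_mod_cast hN1
    field_simp
  have hqpos : ∀ᶠ N : ℕ in atTop, 0 < q N := by
    filter_upwards [hNq.eventually (eventually_gt_nhds (half_lt_self (Real.exp_pos x)))]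
      with N hN
    by_contra hcon
    push_neg at hcon
    have hle : (N:ℝ) * q N ≤ 0 := mul_nonpos_of_nonneg_of_nonpos (Nat.cast_nonneg N) hcon
    nlinarith [Real.exp_pos x]
  have hpow := pow_lim q (Real.exp x) hNq hq0 hqpos
  have hfinal : ∀ᶠ N : ℕ in atTop,
      (1:ℝ) - (1 - q N) ^ N =
      (ℙ {ω | ((⨅ n : Fin N, τ n ω) -
          (C / Real.log N + C * p * Real.log (Real.log N) / (Real.log N) ^ 2
            - C * K / (Real.log N) ^ 2)) /
          (C / (Real.log N) ^ 2) ≤ x}).toReal := by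
    filter_upwards [eventually_ge_atTop 1, hL.eventually (eventually_gt_atTop (0:ℝ))]
      with N hN1 hLpos
    have hapos : 0 < C / (Real.log N) ^ 2 := by positivity
    have hset1 : {ω | ((⨅ n : Fin N, τ n ω) -
        (C / Real.log N + C * p * Real.log (Real.log N) / (Real.log N) ^ 2
          - C * K / (Real.log N) ^ 2)) / (C / (Real.log N) ^ 2) ≤ x}
        = {ω | (⨅ n : Fin N, τ n ω) ≤ t N} := by
      ext ω
      simp only [Set.mem_setOf_eq]
      rw [div_le_iff₀ hapos, sub_le_iff_le_add, htdef]
      beta_reduce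
      have hxa : x * (C / (Real.log (N:ℝ)) ^ 2) = C * x / (Real.log (N:ℝ)) ^ 2 := by ring
      constructor <;> intro h <;> linarith [hxa]
    rw [hset1, min_prob_eq τ hmeas hindep hident N hN1 (t N)]
  exact (Tendsto.congr' hfinal (tendsto_const_nhds.sub hpow))
end

section
/- Let F(s) = (1/s)[1 − (κ̄/√s) B e^{−√s ℓ}] with constants κ̄ > 0, B > 0, ℓ > 0. Then the inverse Laplace transform of (κ̄ B/s^{3/2}) e^{−√s ℓ} gives the short-time asymptotics: the function g(t) whose Laplace transform is (1/s^{3/2}) e^{−√s ℓ} satisfies g(t) ~ (4/(√π ℓ²)) t^{3/2} e^{−ℓ²/(4t)} as t → 0+. Equivalently, ∫_0^∞ e^{−st} (4/(√π ℓ²)) t^{3/2} e^{−ℓ²/(4t)} dt ~ s^{−3/2} e^{−√s ℓ} as s → ∞. -/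
open MeasureTheory Real Filter Topology

open Set

lemma glasser_image {a b : ℝ} (ha : 0 < a) (hb : 0 < b) :
    (fun x => a * x - b / x) '' Ioi 0 = univ := by
  apply eq_univ_of_forall
  intro u
  have h2 : Real.sqrt (u ^ 2 + 4 * a * b) ^ 2 = u ^ 2 + 4 * a * b :=
    Real.sq_sqrt (by nlinarith)
  have h1 : |u| < Real.sqrt (u ^ 2 + 4 * a * b) := by
    rw [← Real.sqrt_sq_eq_abs]
    exact Real.sqrt_lt_sqrt (sq_nonneg u) (by nlinarith)
  have habs := neg_abs_le u
  have habs' := le_abs_self u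
  have hnum : 0 < u + Real.sqrt (u ^ 2 + 4 * a * b) := by nlinarith
  have hx : 0 < (u + Real.sqrt (u ^ 2 + 4 * a * b)) / (2 * a) :=
    div_pos hnum (by linarith)
  refine ⟨(u + Real.sqrt (u ^ 2 + 4 * a * b)) / (2 * a), hx, ?_⟩
  have hne : u + Real.sqrt (u ^ 2 + 4 * a * b) ≠ 0 := ne_of_gt hnum
  have hane : (2 : ℝ) * a ≠ 0 := by positivity
  set r := Real.sqrt (u ^ 2 + 4 * a * b) with hr
  have k1 : a * ((u + r) / (2 * a)) = (u + r) / 2 := by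
    rw [mul_div_assoc', mul_comm (2:ℝ) a, mul_div_mul_left _ _ (ne_of_gt ha)]
  have k2 : b / ((u + r) / (2 * a)) = (r - u) / 2 := by
    rw [div_div_eq_mul_div, div_eq_iff hne]; nlinarith [h2]
  show a * ((u + r) / (2 * a)) - b / ((u + r) / (2 * a)) = u
  rw [k1, k2]; ring

lemma glasser_inj {a b : ℝ} (ha : 0 < a) (hb : 0 < b) :
    InjOn (fun x => a * x - b / x) (Ioi 0) := by
  intro x hx y hy h
  simp only [mem_Ioi] at hx hy
  simp only at h
  have h' : (x - y) * (a * x * y + b) = 0 := by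
    field_simp at h
    nlinarith
  have hpos : a * x * y + b > 0 := by positivity
  rcases mul_eq_zero.mp h' with h1 | h2
  · linarith
  · linarith

lemma glasser_deriv {a b : ℝ} (x : ℝ) (hx : x ∈ Ioi (0:ℝ)) :
    HasDerivWithinAt (fun x => a * x - b / x) (a + b / x ^ 2) (Ioi 0) x := by
  have hx0 : x ≠ 0 := ne_of_gt hx
  have h : HasDerivAt (fun x : ℝ => a * x - b / x) (a * 1 - b * (-(x ^ 2)⁻¹)) x := by
    have h1 : HasDerivAt (fun x : ℝ => a * x) (a * 1) x := (hasDerivAt_id x).const_mul a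
    have h2 : HasDerivAt (fun x : ℝ => b / x) (b * (-(x ^ 2)⁻¹)) x := by
      simpa [div_eq_mul_inv] using (hasDerivAt_inv hx0).const_mul b
    exact h1.sub h2
  have := h.hasDerivWithinAt (s := Ioi 0)
  exact this.congr_deriv (by ring)

lemma glasser_total {a b : ℝ} (ha : 0 < a) (hb : 0 < b) :
    (∫ x in Ioi (0:ℝ), (a + b / x ^ 2) * Real.exp (-(a * x - b / x) ^ 2))
      = Real.sqrt Real.pi ∧
    IntegrableOn (fun x => (a + b / x ^ 2) * Real.exp (-(a * x - b / x) ^ 2)) (Ioi 0) := by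
  have hderiv := fun x hx => glasser_deriv (a := a) (b := b) x hx
  have hinj := glasser_inj ha hb
  have himg := glasser_image ha hb
  have habs : ∀ x ∈ Ioi (0:ℝ), |a + b / x ^ 2| = a + b / x ^ 2 := by
    intro x hx
    have : (0:ℝ) < x := hx
    rw [abs_of_pos]; positivity
  constructor
  · have := integral_image_eq_integral_abs_deriv_smul measurableSet_Ioi hderiv hinj
      (fun u => Real.exp (-u ^ 2))
    rw [himg] at this
    have hg : (∫ u : ℝ, Real.exp (-u ^ 2)) = Real.sqrt Real.pi := by
      simpa using integral_gaussian 1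
    rw [MeasureTheory.setIntegral_univ, hg] at this
    rw [this]
    apply setIntegral_congr_fun measurableSet_Ioi
    intro x hx
    simp only [smul_eq_mul, habs x hx]
  · have := (integrableOn_image_iff_integrableOn_abs_deriv_smul measurableSet_Ioi hderiv hinj
      (fun u => Real.exp (-u ^ 2))).mp ?_
    · apply this.congr_fun ?_ measurableSet_Ioi
      intro x hx
      simp only [smul_eq_mul, habs x hx]
    · rw [himg]
      rw [integrableOn_univ]
      simpa using integrable_exp_neg_mul_sq (b := (1:ℝ)) one_pos

lemma glasser_reflect {a b : ℝ} (ha : 0 < a) (hb : 0 < b) (g : ℝ → ℝ)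
    (hg : ∀ x ∈ Ioi (0:ℝ), g (b / (a * x)) = g x) :
    (∫ x in Ioi (0:ℝ), g x) = ∫ x in Ioi (0:ℝ), (b / (a * x ^ 2)) * g x := by
  have himg : (fun x => b / (a * x)) '' Ioi 0 = Ioi (0:ℝ) := by
    apply Subset.antisymm
    · rintro _ ⟨x, hx, rfl⟩
      have : (0:ℝ) < x := hx
      exact div_pos hb (by positivity)
    · intro y hy
      have hy0 : (0:ℝ) < y := hy
      exact ⟨b / (a * y), div_pos hb (by positivity), by field_simp⟩
  have hderiv : ∀ x ∈ Ioi (0:ℝ),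
      HasDerivWithinAt (fun x => b / (a * x)) (-(b / (a * x ^ 2))) (Ioi 0) x := by
    intro x hx
    have hx0 : x ≠ 0 := ne_of_gt hx
    have h : HasDerivAt (fun x : ℝ => b / (a * x)) ((b / a) * (-(x ^ 2)⁻¹)) x := by
      have := (hasDerivAt_inv hx0).const_mul (b / a)
      apply this.congr_deriv ?_ |>.congr_of_eventuallyEq ?_
      · rfl
      · filter_upwards with y
        rw [div_mul_eq_div_div, div_eq_mul_inv (b/a)]
    have := h.hasDerivWithinAt (s := Ioi 0)
    exact this.congr_deriv (by ring)
  have hinj : InjOn (fun x => b / (a * x)) (Ioi 0) := by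
    intro x hx y hy h
    simp only at h
    have hx0 : x ≠ 0 := ne_of_gt hx
    have hy0 : y ≠ 0 := ne_of_gt hy
    rw [div_eq_div_iff (by positivity) (by positivity)] at h
    have h' : b * a * x = b * a * y := by linear_combination -h
    exact mul_left_cancel₀ (mul_ne_zero (ne_of_gt hb) (ne_of_gt ha)) h'
  have := integral_image_eq_integral_abs_deriv_smul measurableSet_Ioi hderiv hinj g
  rw [himg] at this
  rw [this]
  apply setIntegral_congr_fun measurableSet_Ioi
  intro x hx
  have hx0 : (0:ℝ) < x := hx
  have : |(-(b / (a * x ^ 2)))| = b / (a * x ^ 2) := by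
    rw [abs_neg, abs_of_pos]; positivity
  simp only [smul_eq_mul, this, hg x hx]

lemma glasser_K {a b : ℝ} (ha : 0 < a) (hb : 0 < b) :
    (∫ x in Ioi (0:ℝ), Real.exp (-(a * x - b / x) ^ 2)) = Real.sqrt Real.pi / (2 * a) ∧
    IntegrableOn (fun x => Real.exp (-(a * x - b / x) ^ 2)) (Ioi 0) := by
  obtain ⟨htot, hint⟩ := glasser_total ha hb
  set E : ℝ → ℝ := fun x => Real.exp (-(a * x - b / x) ^ 2) with hE
  have hmeas : AEStronglyMeasurable E (volume.restrict (Ioi 0)) := by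
    apply ContinuousOn.aestronglyMeasurable ?_ measurableSet_Ioi
    apply ContinuousOn.rexp
    apply ContinuousOn.neg
    apply ContinuousOn.pow
    exact (continuousOn_const.mul continuousOn_id).sub
      (continuousOn_const.div continuousOn_id (fun x hx => ne_of_gt hx))
  have hEint : IntegrableOn E (Ioi 0) := by
    apply Integrable.mono' (hint.const_mul (1 / a)) hmeas
    filter_upwards [ae_restrict_mem measurableSet_Ioi] with x hx
    have hx0 : (0:ℝ) < x := hx
    have hpos : (0:ℝ) < Real.exp (-(a * x - b / x) ^ 2) := Real.exp_pos _
    rw [Real.norm_eq_abs, abs_of_pos hpos]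
    rw [div_mul_eq_mul_div, one_mul, le_div_iff₀ ha]
    have : a ≤ a + b / x ^ 2 := by
      have : 0 < b / x ^ 2 := by positivity
      linarith
    nlinarith [hpos]
  have hrefl := glasser_reflect ha hb E (by
    intro x hx
    have hx0 : (0:ℝ) < x := hx
    have : a * (b / (a * x)) - b / (b / (a * x)) = -(a * x - b / x) := by
      field_simp
      ring
    simp only [hE, this, neg_sq])
  have hE2int : IntegrableOn (fun x => (b / (a * x ^ 2)) * E x) (Ioi 0) := by
    apply Integrable.mono' (hint.const_mul (1 / a)) ?_
    · filter_upwards [ae_restrict_mem measurableSet_Ioi] with x hx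
      have hx0 : (0:ℝ) < x := hx
      have hpos : (0:ℝ) < E x := Real.exp_pos _
      have h1 : 0 ≤ (b / (a * x ^ 2)) * E x := by positivity
      rw [Real.norm_eq_abs, abs_of_nonneg h1]
      have h2 : b / (a * x ^ 2) * E x = 1 / a * ((b / x ^ 2) * E x) := by
        field_simp
      rw [h2]
      have h3 : b / x ^ 2 ≤ a + b / x ^ 2 := by linarith
      have h4 : (0:ℝ) ≤ 1 / a := by positivity
      exact mul_le_mul_of_nonneg_left (mul_le_mul_of_nonneg_right h3 hpos.le) h4
    · exact (ContinuousOn.aestronglyMeasurable (by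
        apply ContinuousOn.mul ?_ ?_
        · exact continuousOn_const.div
            (continuousOn_const.mul (continuousOn_id.pow 2))
            (fun x hx => by have : (0:ℝ) < x := hx; positivity)
        · apply ContinuousOn.rexp
          apply ContinuousOn.neg
          apply ContinuousOn.pow
          exact (continuousOn_const.mul continuousOn_id).sub
            (continuousOn_const.div continuousOn_id (fun x hx => ne_of_gt hx))) measurableSet_Ioi)
  -- split total
  have hsplit : (∫ x in Ioi (0:ℝ), (a + b / x ^ 2) * E x)
      = a * (∫ x in Ioi (0:ℝ), E x) + b / b * a * (∫ x in Ioi (0:ℝ), E x) := by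
    have h1 : (∫ x in Ioi (0:ℝ), (a + b / x ^ 2) * E x)
        = (∫ x in Ioi (0:ℝ), a * E x + a * ((b / (a * x ^ 2)) * E x)) := by
      apply setIntegral_congr_fun measurableSet_Ioi
      intro x hx
      have hx0 : (0:ℝ) < x := hx
      field_simp
    rw [h1, integral_add (hEint.const_mul a) (hE2int.const_mul a),
      integral_const_mul, integral_const_mul, ← hrefl]
    rw [div_self (ne_of_gt hb)]
    ring
  rw [hsplit] at htot
  rw [div_self (ne_of_gt hb), one_mul] at htot
  have hK : (∫ x in Ioi (0:ℝ), E x) = Real.sqrt Real.pi / (2 * a) := by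
    have h2a : (2 * a) ≠ 0 := by positivity
    field_simp
    linarith [htot]
  exact ⟨hK, hEint⟩

lemma Jm1_eval {s c : ℝ} (hs : 0 < s) (hc : 0 < c) :
    (∫ t in Ioi (0:ℝ), (Real.sqrt t)⁻¹ * Real.exp (-s * t - c / t))
      = Real.sqrt Real.pi / Real.sqrt s * Real.exp (-(2 * (Real.sqrt s * Real.sqrt c))) ∧
    IntegrableOn (fun t => (Real.sqrt t)⁻¹ * Real.exp (-s * t - c / t)) (Ioi 0) := by
  set a := Real.sqrt s with ha'
  set b := Real.sqrt c with hb'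
  have ha : 0 < a := Real.sqrt_pos.mpr hs
  have hb : 0 < b := Real.sqrt_pos.mpr hc
  have has : a ^ 2 = s := Real.sq_sqrt hs.le
  have hbs : b ^ 2 = c := Real.sq_sqrt hc.le
  set g : ℝ → ℝ := fun t => (Real.sqrt t)⁻¹ * Real.exp (-s * t - c / t) with hg
  have himg : (fun x : ℝ => x ^ 2) '' Ioi 0 = Ioi (0:ℝ) := by
    apply Subset.antisymm
    · rintro _ ⟨x, hx, rfl⟩
      have : (0:ℝ) < x := hx
      exact pow_pos this 2
    · intro y hy
      have hy0 : (0:ℝ) < y := hy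
      exact ⟨Real.sqrt y, Real.sqrt_pos.mpr hy0, Real.sq_sqrt hy0.le⟩
  have hderiv : ∀ x ∈ Ioi (0:ℝ),
      HasDerivWithinAt (fun x : ℝ => x ^ 2) (2 * x) (Ioi 0) x := by
    intro x hx
    simpa using (hasDerivAt_pow 2 x).hasDerivWithinAt (s := Ioi 0)
  have hinj : InjOn (fun x : ℝ => x ^ 2) (Ioi 0) := by
    intro x hx y hy h
    have hx0 : (0:ℝ) < x := hx
    have hy0 : (0:ℝ) < y := hy
    have h' : x ^ 2 = y ^ 2 := h
    have h'' : (x - y) * (x + y) = 0 := by nlinarith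
    rcases mul_eq_zero.mp h'' with h1 | h2
    · linarith
    · linarith
  have hkey : ∀ x ∈ Ioi (0:ℝ), |2 * x| * g (x ^ 2)
      = (2 * Real.exp (-(2 * (a * b)))) * Real.exp (-(a * x - b / x) ^ 2) := by
    intro x hx
    have hx0 : (0:ℝ) < x := hx
    have h1 : Real.sqrt (x ^ 2) = x := Real.sqrt_sq hx0.le
    have hx2 : x ≠ 0 := ne_of_gt hx0
    have hcross : 2 * (a * x) * (b / x) = 2 * (a * b) := by field_simp
    have hsq : (a * x - b / x) ^ 2 = s * x ^ 2 - 2 * (a * b) + c / x ^ 2 := by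
      rw [sub_sq, mul_pow, div_pow, has, hbs, hcross]
    have h2 : -s * x ^ 2 - c / x ^ 2 = -(a * x - b / x) ^ 2 + -(2 * (a * b)) := by
      rw [hsq]; ring
    simp only [hg, h1, h2, Real.exp_add]
    rw [abs_of_pos (by positivity)]
    field_simp
  obtain ⟨hK, hKint⟩ := glasser_K ha hb
  constructor
  · have := integral_image_eq_integral_abs_deriv_smul measurableSet_Ioi hderiv hinj g
    rw [himg] at this
    rw [this]
    rw [setIntegral_congr_fun measurableSet_Ioi (fun x hx => by
      simp only [smul_eq_mul]; exact hkey x hx)]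
    rw [integral_const_mul, hK]
    field_simp
  · have hiff := integrableOn_image_iff_integrableOn_abs_deriv_smul
      measurableSet_Ioi hderiv hinj g
    rw [himg] at hiff
    rw [hiff]
    apply (hKint.const_mul (2 * Real.exp (-(2 * (a * b))))).congr
    filter_upwards [ae_restrict_mem measurableSet_Ioi] with x hx
    simp only [smul_eq_mul]
    exact (hkey x hx).symm

lemma Jm3_eval {s c : ℝ} (hs : 0 < s) (hc : 0 < c) :
    (∫ t in Ioi (0:ℝ), (t * Real.sqrt t)⁻¹ * Real.exp (-s * t - c / t))
      = Real.sqrt Real.pi / Real.sqrt c * Real.exp (-(2 * (Real.sqrt s * Real.sqrt c))) ∧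
    IntegrableOn (fun t => (t * Real.sqrt t)⁻¹ * Real.exp (-s * t - c / t)) (Ioi 0) := by
  obtain ⟨hJ, hJint⟩ := Jm1_eval hs hc
  set g : ℝ → ℝ := fun t => (Real.sqrt t)⁻¹ * Real.exp (-s * t - c / t) with hg
  have himg : (fun t : ℝ => c / (s * t)) '' Ioi 0 = Ioi (0:ℝ) := by
    apply Subset.antisymm
    · rintro _ ⟨x, hx, rfl⟩
      have : (0:ℝ) < x := hx
      exact div_pos hc (by positivity)
    · intro y hy
      have hy0 : (0:ℝ) < y := hy
      exact ⟨c / (s * y), div_pos hc (by positivity), by field_simp⟩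
  have hderiv : ∀ t ∈ Ioi (0:ℝ),
      HasDerivWithinAt (fun t : ℝ => c / (s * t)) (-(c / (s * t ^ 2))) (Ioi 0) t := by
    intro t ht
    have ht0 : t ≠ 0 := ne_of_gt ht
    have h : HasDerivAt (fun t : ℝ => c / (s * t)) ((c / s) * (-(t ^ 2)⁻¹)) t := by
      have := (hasDerivAt_inv ht0).const_mul (c / s)
      apply HasDerivAt.congr_of_eventuallyEq this
      filter_upwards with y
      rw [div_mul_eq_div_div, div_eq_mul_inv (c/s)]
    have := h.hasDerivWithinAt (s := Ioi 0)
    exact this.congr_deriv (by ring)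
  have hinj : InjOn (fun t : ℝ => c / (s * t)) (Ioi 0) := by
    intro x hx y hy h
    simp only at h
    have hx0 : x ≠ 0 := ne_of_gt hx
    have hy0 : y ≠ 0 := ne_of_gt hy
    rw [div_eq_div_iff (by positivity) (by positivity)] at h
    have h' : c * s * x = c * s * y := by linear_combination -h
    exact mul_left_cancel₀ (mul_ne_zero (ne_of_gt hc) (ne_of_gt hs)) h'
  have hkey : ∀ t ∈ Ioi (0:ℝ), |(-(c / (s * t ^ 2)))| * g (c / (s * t))
      = (Real.sqrt c / Real.sqrt s) * ((t * Real.sqrt t)⁻¹ * Real.exp (-s * t - c / t)) := by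
    intro t ht
    have ht0 : (0:ℝ) < t := ht
    obtain ⟨τ, hτ, rfl⟩ : ∃ τ, 0 < τ ∧ τ ^ 2 = t :=
      ⟨Real.sqrt t, Real.sqrt_pos.mpr ht0, Real.sq_sqrt ht0.le⟩
    obtain ⟨α, hα, rfl⟩ : ∃ α, 0 < α ∧ α ^ 2 = s :=
      ⟨Real.sqrt s, Real.sqrt_pos.mpr hs, Real.sq_sqrt hs.le⟩
    obtain ⟨β, hβ, rfl⟩ : ∃ β, 0 < β ∧ β ^ 2 = c :=
      ⟨Real.sqrt c, Real.sqrt_pos.mpr hc, Real.sq_sqrt hc.le⟩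
    have habs : |(-(β ^ 2 / (α ^ 2 * (τ ^ 2) ^ 2)))| = β ^ 2 / (α ^ 2 * (τ ^ 2) ^ 2) := by
      rw [abs_neg, abs_of_pos]; positivity
    have hsq1 : β ^ 2 / (α ^ 2 * τ ^ 2) = (β / (α * τ)) ^ 2 := by
      field_simp
    have hsqrt : Real.sqrt (β ^ 2 / (α ^ 2 * τ ^ 2)) = β / (α * τ) := by
      rw [hsq1, Real.sqrt_sq (by positivity)]
    have harg : -α ^ 2 * (β ^ 2 / (α ^ 2 * τ ^ 2)) - β ^ 2 / (β ^ 2 / (α ^ 2 * τ ^ 2))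
        = -α ^ 2 * τ ^ 2 - β ^ 2 / τ ^ 2 := by
      field_simp
      ring
    simp only [hg, habs, hsqrt, harg, Real.sqrt_sq hτ.le, Real.sqrt_sq hα.le,
      Real.sqrt_sq hβ.le]
    field_simp
  constructor
  · have := integral_image_eq_integral_abs_deriv_smul measurableSet_Ioi hderiv hinj g
    rw [himg] at this
    have hJ' : (∫ t in Ioi (0:ℝ), g t) = Real.sqrt Real.pi / Real.sqrt s
        * Real.exp (-(2 * (Real.sqrt s * Real.sqrt c))) := hJ
    rw [this] at hJ'
    rw [setIntegral_congr_fun measurableSet_Ioi (fun t htt => by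
      simp only [smul_eq_mul]; exact hkey t htt)] at hJ'
    rw [integral_const_mul] at hJ'
    have hss : Real.sqrt s ≠ 0 := ne_of_gt (Real.sqrt_pos.mpr hs)
    have hcs : Real.sqrt c ≠ 0 := ne_of_gt (Real.sqrt_pos.mpr hc)
    have hfac : Real.sqrt c / Real.sqrt s ≠ 0 := div_ne_zero hcs hss
    set I := ∫ t in Ioi (0:ℝ), (t * Real.sqrt t)⁻¹ * Real.exp (-s * t - c / t) with hI
    field_simp at hJ' ⊢
    linarith [hJ']
  · have hiff := integrableOn_image_iff_integrableOn_abs_deriv_smul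
      measurableSet_Ioi hderiv hinj g
    rw [himg] at hiff
    have := hiff.mp hJint
    have h2 := this.const_mul (Real.sqrt s / Real.sqrt c)
    apply h2.congr
    filter_upwards [ae_restrict_mem measurableSet_Ioi] with t htt
    simp only [smul_eq_mul]
    rw [hkey t htt]
    have hss : Real.sqrt s ≠ 0 := ne_of_gt (Real.sqrt_pos.mpr hs)
    have hcs : Real.sqrt c ≠ 0 := ne_of_gt (Real.sqrt_pos.mpr hc)
    have ht0 : (0:ℝ) < t := htt
    have hts : Real.sqrt t ≠ 0 := ne_of_gt (Real.sqrt_pos.mpr ht0)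
    have htne : t ≠ 0 := ne_of_gt ht0
    field_simp

lemma exp_arg_le {s c t : ℝ} (hc : 0 < c) (ht : 0 < t) :
    Real.exp (-s * t - c / t) ≤ Real.exp (-s * t) := by
  apply Real.exp_le_exp.mpr
  have : 0 < c / t := by positivity
  linarith

lemma cont_integrand {s c : ℝ} (h : ℝ → ℝ) (hh : ContinuousOn h (Ioi 0)) :
    ContinuousOn (fun t => h t * Real.exp (-s * t - c / t)) (Ioi 0) := by
  apply hh.mul
  apply ContinuousOn.rexp
  exact (continuousOn_const.mul continuousOn_id).sub
    (continuousOn_const.div continuousOn_id (fun x hx => ne_of_gt hx))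

lemma J1_integrable {s c : ℝ} (hs : 0 < s) (hc : 0 < c) :
    IntegrableOn (fun t => Real.sqrt t * Real.exp (-s * t - c / t)) (Ioi 0) := by
  have hD : IntegrableOn (fun t : ℝ => t ^ ((1:ℝ)/2) * Real.exp (-s * t ^ (1:ℝ))) (Ioi 0) :=
    integrableOn_rpow_mul_exp_neg_mul_rpow (by norm_num) one_pos hs
  apply Integrable.mono' hD
  · exact (cont_integrand _ Real.continuous_sqrt.continuousOn).aestronglyMeasurable
      measurableSet_Ioi
  · filter_upwards [ae_restrict_mem measurableSet_Ioi] with t ht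
    have ht0 : (0:ℝ) < t := ht
    rw [Real.norm_eq_abs, abs_of_nonneg (by positivity), Real.rpow_one,
      ← Real.sqrt_eq_rpow]
    exact mul_le_mul_of_nonneg_left (exp_arg_le hc ht0) (Real.sqrt_nonneg t)

lemma J3_integrable {s c : ℝ} (hs : 0 < s) (hc : 0 < c) :
    IntegrableOn (fun t => t * Real.sqrt t * Real.exp (-s * t - c / t)) (Ioi 0) := by
  have hD : IntegrableOn (fun t : ℝ => t ^ ((3:ℝ)/2) * Real.exp (-s * t ^ (1:ℝ))) (Ioi 0) :=
    integrableOn_rpow_mul_exp_neg_mul_rpow (by norm_num) one_pos hs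
  apply Integrable.mono' hD
  · exact (cont_integrand _ (continuousOn_id.mul Real.continuous_sqrt.continuousOn)).aestronglyMeasurable
      measurableSet_Ioi
  · filter_upwards [ae_restrict_mem measurableSet_Ioi] with t ht
    have ht0 : (0:ℝ) < t := ht
    have h32 : t ^ ((3:ℝ)/2) = t * Real.sqrt t := by
      rw [show ((3:ℝ)/2) = 1 + 1/2 by norm_num, Real.rpow_add ht0, Real.rpow_one,
        ← Real.sqrt_eq_rpow]
    rw [Real.norm_eq_abs, abs_of_nonneg (by positivity), Real.rpow_one, h32]
    exact mul_le_mul_of_nonneg_left (exp_arg_le hc ht0) (by positivity)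

lemma lim_zero_gen {s c : ℝ} (hs : 0 < s) (hc : 0 < c) (h : ℝ → ℝ)
    (hb : ∀ t, 0 ≤ t → 0 ≤ h t) (hcont : Tendsto h (𝓝[Ici 0] 0) (𝓝 0)) :
    Tendsto (fun t => h t * Real.exp (-s * t - c / t)) (𝓝[Ici 0] 0) (𝓝 0) := by
  apply squeeze_zero' (g := h)
  · filter_upwards [self_mem_nhdsWithin] with t ht
    exact mul_nonneg (hb t ht) (Real.exp_pos _).le
  · filter_upwards [self_mem_nhdsWithin] with t ht
    have ht0 : (0:ℝ) ≤ t := ht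
    rcases eq_or_lt_of_le ht0 with h' | h'
    · simp [← h']
    · have harg : -s * t - c / t ≤ 0 := by
        have h1 : 0 < c / t := div_pos hc h'
        nlinarith
      calc h t * Real.exp (-s * t - c / t) ≤ h t * 1 :=
            mul_le_mul_of_nonneg_left (Real.exp_le_one_iff.mpr harg) (hb t ht0)
        _ = h t := mul_one _
  · exact hcont

lemma lim_top_gen {s c σ : ℝ} (hs : 0 < s) (hc : 0 < c) (h : ℝ → ℝ)
    (hb : ∀ t, 0 < t → 0 ≤ h t ∧ h t ≤ t ^ σ) :
    Tendsto (fun t => h t * Real.exp (-s * t - c / t)) atTop (𝓝 0) := by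
  apply squeeze_zero' (g := fun t => t ^ σ * Real.exp (-s * t))
  · filter_upwards [eventually_gt_atTop 0] with t ht
    exact mul_nonneg (hb t ht).1 (Real.exp_pos _).le
  · filter_upwards [eventually_gt_atTop 0] with t ht
    exact mul_le_mul (hb t ht).2 (exp_arg_le hc ht) (Real.exp_pos _).le
      (Real.rpow_nonneg ht.le σ)
  · exact tendsto_rpow_mul_exp_neg_mul_atTop_nhds_zero σ s hs

lemma exp_hasDeriv {s c : ℝ} {t : ℝ} (ht : t ≠ 0) :
    HasDerivAt (fun t => Real.exp (-s * t - c / t))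
      ((-s + c / t ^ 2) * Real.exp (-s * t - c / t)) t := by
  have hu : HasDerivAt (fun t : ℝ => -s * t - c / t) (-s + c / t ^ 2) t := by
    have h1 : HasDerivAt (fun t : ℝ => -s * t) (-s * 1) t := (hasDerivAt_id t).const_mul (-s)
    have h2 : HasDerivAt (fun t : ℝ => c / t) (c * (-(t ^ 2)⁻¹)) t := by
      simpa [div_eq_mul_inv] using (hasDerivAt_inv ht).const_mul c
    have := h1.sub h2
    exact this.congr_deriv (by ring)
  simpa [mul_comm] using hu.exp

lemma ibp1 {s c : ℝ} (hs : 0 < s) (hc : 0 < c) :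
    (1/2) * (∫ t in Ioi (0:ℝ), (Real.sqrt t)⁻¹ * Real.exp (-s * t - c / t))
      - s * (∫ t in Ioi (0:ℝ), Real.sqrt t * Real.exp (-s * t - c / t))
      + c * (∫ t in Ioi (0:ℝ), (t * Real.sqrt t)⁻¹ * Real.exp (-s * t - c / t)) = 0 := by
  set E : ℝ → ℝ := fun t => Real.exp (-s * t - c / t) with hE
  set F : ℝ → ℝ := fun t => Real.sqrt t * E t with hF
  set F' : ℝ → ℝ := fun t =>
    (1/2) * ((Real.sqrt t)⁻¹ * E t) - s * (Real.sqrt t * E t)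
      + c * ((t * Real.sqrt t)⁻¹ * E t) with hF'
  obtain ⟨_, hJm1int⟩ := Jm1_eval hs hc
  obtain ⟨_, hJm3int⟩ := Jm3_eval hs hc
  have hJ1int := J1_integrable hs hc
  have hF'int : IntegrableOn F' (Ioi 0) :=
    ((hJm1int.const_mul (1/2)).sub (hJ1int.const_mul s)).add (hJm3int.const_mul c)
  have hderiv : ∀ t ∈ Ioi (0:ℝ), HasDerivAt F (F' t) t := by
    intro t ht
    have ht0 : (0:ℝ) < t := ht
    have htne : t ≠ 0 := ne_of_gt ht0
    have hts : Real.sqrt t ≠ 0 := ne_of_gt (Real.sqrt_pos.mpr ht0)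
    have h1 : HasDerivAt Real.sqrt (1 / (2 * Real.sqrt t)) t := Real.hasDerivAt_sqrt htne
    have h2 := exp_hasDeriv (s := s) (c := c) htne
    have hd := h1.mul h2
    have heq : F' t = 1 / (2 * Real.sqrt t) * E t
        + Real.sqrt t * ((-s + c / t ^ 2) * E t) := by
      obtain ⟨τ, hτ, rfl⟩ : ∃ τ, 0 < τ ∧ τ ^ 2 = t :=
        ⟨Real.sqrt t, Real.sqrt_pos.mpr ht0, Real.sq_sqrt ht0.le⟩
      simp only [hF', hE, Real.sqrt_sq hτ.le]
      field_simp
      ring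
    rw [heq]
    exact hd
  have hcont : ContinuousWithinAt F (Ici 0) 0 := by
    have key := lim_zero_gen hs hc Real.sqrt (fun t _ => Real.sqrt_nonneg t)
      (by simpa using (Real.continuous_sqrt.tendsto 0).mono_left nhdsWithin_le_nhds)
    unfold ContinuousWithinAt
    have h0 : F 0 = 0 := by simp [hF, hE]
    rw [h0]
    exact key
  have htop : Tendsto F atTop (𝓝 0) := by
    apply lim_top_gen hs hc (σ := 1/2) Real.sqrt
    intro t ht
    exact ⟨Real.sqrt_nonneg t, le_of_eq (Real.sqrt_eq_rpow t ▸ rfl)⟩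
  have h0 : F 0 = 0 := by simp [hF]
  have := integral_Ioi_of_hasDerivAt_of_tendsto hcont
    (fun t ht => hderiv t ht) hF'int htop
  rw [h0, sub_zero] at this
  have hsplit : (∫ t in Ioi (0:ℝ), F' t)
      = (1/2) * (∫ t in Ioi (0:ℝ), (Real.sqrt t)⁻¹ * E t)
        - s * (∫ t in Ioi (0:ℝ), Real.sqrt t * E t)
        + c * (∫ t in Ioi (0:ℝ), (t * Real.sqrt t)⁻¹ * E t) := by
    have h12 : Integrable (fun t => (1/2) * ((Real.sqrt t)⁻¹ * E t)
        - s * (Real.sqrt t * E t)) (volume.restrict (Ioi 0)) :=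
      (hJm1int.const_mul (1/2)).sub (hJ1int.const_mul s)
    rw [hF']
    rw [integral_add h12 (hJm3int.const_mul c),
      integral_sub (hJm1int.const_mul (1/2)) (hJ1int.const_mul s),
      integral_const_mul, integral_const_mul, integral_const_mul]
  rw [hsplit] at this
  exact this

lemma ibp2 {s c : ℝ} (hs : 0 < s) (hc : 0 < c) :
    (3/2) * (∫ t in Ioi (0:ℝ), Real.sqrt t * Real.exp (-s * t - c / t))
      - s * (∫ t in Ioi (0:ℝ), t * Real.sqrt t * Real.exp (-s * t - c / t))
      + c * (∫ t in Ioi (0:ℝ), (Real.sqrt t)⁻¹ * Real.exp (-s * t - c / t)) = 0 := by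
  set E : ℝ → ℝ := fun t => Real.exp (-s * t - c / t) with hE
  set F : ℝ → ℝ := fun t => t * Real.sqrt t * E t with hF
  set F' : ℝ → ℝ := fun t =>
    (3/2) * (Real.sqrt t * E t) - s * (t * Real.sqrt t * E t)
      + c * ((Real.sqrt t)⁻¹ * E t) with hF'
  obtain ⟨_, hJm1int⟩ := Jm1_eval hs hc
  have hJ1int := J1_integrable hs hc
  have hJ3int := J3_integrable hs hc
  have hF'int : IntegrableOn F' (Ioi 0) :=
    ((hJ1int.const_mul (3/2)).sub (hJ3int.const_mul s)).add (hJm1int.const_mul c)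
  have hderiv : ∀ t ∈ Ioi (0:ℝ), HasDerivAt F (F' t) t := by
    intro t ht
    have ht0 : (0:ℝ) < t := ht
    have htne : t ≠ 0 := ne_of_gt ht0
    have h1 : HasDerivAt (fun t : ℝ => t * Real.sqrt t)
        (1 * Real.sqrt t + t * (1 / (2 * Real.sqrt t))) t :=
      (hasDerivAt_id t).mul (Real.hasDerivAt_sqrt htne)
    have h2 := exp_hasDeriv (s := s) (c := c) htne
    have hd := h1.mul h2
    have heq : F' t = (1 * Real.sqrt t + t * (1 / (2 * Real.sqrt t))) * E t
        + t * Real.sqrt t * ((-s + c / t ^ 2) * E t) := by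
      obtain ⟨τ, hτ, rfl⟩ : ∃ τ, 0 < τ ∧ τ ^ 2 = t :=
        ⟨Real.sqrt t, Real.sqrt_pos.mpr ht0, Real.sq_sqrt ht0.le⟩
      simp only [hF', hE, Real.sqrt_sq hτ.le]
      field_simp
      ring
    rw [heq]
    exact hd
  have hcont : ContinuousWithinAt F (Ici 0) 0 := by
    have key := lim_zero_gen hs hc (fun t => t * Real.sqrt t)
      (fun t ht => by positivity)
      (by
        have : Tendsto (fun t : ℝ => t * Real.sqrt t) (𝓝 0) (𝓝 (0 * Real.sqrt 0)) :=
          (continuous_id.mul Real.continuous_sqrt).tendsto 0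
        simpa using this.mono_left nhdsWithin_le_nhds)
    unfold ContinuousWithinAt
    have h0 : F 0 = 0 := by simp [hF, hE]
    rw [h0]
    exact key
  have htop : Tendsto F atTop (𝓝 0) := by
    apply lim_top_gen hs hc (σ := 3/2) (fun t => t * Real.sqrt t)
    intro t ht
    refine ⟨by positivity, le_of_eq ?_⟩
    rw [show ((3:ℝ)/2) = 1 + 1/2 by norm_num, Real.rpow_add ht, Real.rpow_one,
      ← Real.sqrt_eq_rpow]
  have h0 : F 0 = 0 := by simp [hF, hE]
  have := integral_Ioi_of_hasDerivAt_of_tendsto hcont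
    (fun t ht => hderiv t ht) hF'int htop
  rw [h0, sub_zero] at this
  have hsplit : (∫ t in Ioi (0:ℝ), F' t)
      = (3/2) * (∫ t in Ioi (0:ℝ), Real.sqrt t * E t)
        - s * (∫ t in Ioi (0:ℝ), t * Real.sqrt t * E t)
        + c * (∫ t in Ioi (0:ℝ), (Real.sqrt t)⁻¹ * E t) := by
    have h12 : Integrable (fun t => (3/2) * (Real.sqrt t * E t)
        - s * (t * Real.sqrt t * E t)) (volume.restrict (Ioi 0)) :=
      (hJ1int.const_mul (3/2)).sub (hJ3int.const_mul s)
    rw [hF']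
    rw [integral_add h12 (hJm1int.const_mul c),
      integral_sub (hJ1int.const_mul (3/2)) (hJ3int.const_mul s),
      integral_const_mul, integral_const_mul, integral_const_mul]
  rw [hsplit] at this
  exact this

lemma J3_eval {s c : ℝ} (hs : 0 < s) (hc : 0 < c) :
    (∫ t in Ioi (0:ℝ), t * Real.sqrt t * Real.exp (-s * t - c / t))
      = Real.sqrt Real.pi * Real.exp (-(2 * (Real.sqrt s * Real.sqrt c)))
        * (c / Real.sqrt s + (3/2) * (Real.sqrt c / s) + (3/4) / (s * Real.sqrt s)) / s := by
  obtain ⟨α, hα, rfl⟩ : ∃ α, 0 < α ∧ α ^ 2 = s :=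
    ⟨Real.sqrt s, Real.sqrt_pos.mpr hs, Real.sq_sqrt hs.le⟩
  obtain ⟨β, hβ, rfl⟩ : ∃ β, 0 < β ∧ β ^ 2 = c :=
    ⟨Real.sqrt c, Real.sqrt_pos.mpr hc, Real.sq_sqrt hc.le⟩
  obtain ⟨hJm1, _⟩ := Jm1_eval hs hc
  obtain ⟨hJm3, _⟩ := Jm3_eval hs hc
  have h1 := ibp1 hs hc
  have h2 := ibp2 hs hc
  simp only [Real.sqrt_sq hα.le, Real.sqrt_sq hβ.le] at hJm1 hJm3 h1 h2 ⊢
  rw [hJm1, hJm3] at h1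
  rw [hJm1] at h2
  set X := Real.exp (-(2 * (α * β))) with hX
  set J1 := ∫ t in Ioi (0:ℝ), Real.sqrt t * Real.exp (-α ^ 2 * t - β ^ 2 / t) with hJ1
  set J3 := ∫ t in Ioi (0:ℝ), t * Real.sqrt t * Real.exp (-α ^ 2 * t - β ^ 2 / t) with hJ3
  have hαne : α ≠ 0 := ne_of_gt hα
  have hβne : β ≠ 0 := ne_of_gt hβ
  have hsne : α ^ 2 ≠ 0 := pow_ne_zero 2 hαne
  have hJ1v : J1 = ((1/2) * (Real.sqrt Real.pi / α * X)
      + β ^ 2 * (Real.sqrt Real.pi / β * X)) / α ^ 2 := by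
    rw [eq_div_iff hsne]; linarith
  have hJ3v : J3 = ((3/2) * J1 + β ^ 2 * (Real.sqrt Real.pi / α * X)) / α ^ 2 := by
    rw [eq_div_iff hsne]; linarith
  rw [hJ3v, hJ1v]
  field_simp
  ring

/-- Short-time asymptotics via Laplace transforms: for fixed `ℓ > 0`, the
Laplace transform of `t ↦ (4/(√π ℓ²)) t^{3/2} e^{−ℓ²/(4t)}` is asymptotically
equivalent to `s^{−3/2} e^{−ℓ√s}` as `s → ∞`. -/
theorem laplace_transform_short_time_asymptotics
    (ℓ : ℝ) (hℓ : 0 < ℓ) :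
    Tendsto
      (fun s : ℝ =>
        (∫ t in Set.Ioi (0 : ℝ),
            Real.exp (-s * t) *
              (4 / (Real.sqrt Real.pi * ℓ ^ 2) * t ^ ((3 : ℝ) / 2) *
                Real.exp (-ℓ ^ 2 / (4 * t)))) /
          (s ^ (-(3 : ℝ) / 2) * Real.exp (-Real.sqrt s * ℓ)))
      atTop (𝓝 1) := by
  have hc : (0:ℝ) < ℓ ^ 2 / 4 := by positivity
  have hnice : Tendsto (fun s : ℝ => 1 + 3 / (ℓ * Real.sqrt s) + 3 / (ℓ ^ 2 * s))
      atTop (𝓝 1) := by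
    have hsqrt : Tendsto Real.sqrt atTop atTop := by
      rw [tendsto_atTop_atTop]
      intro b
      exact ⟨b ^ 2, fun a ha => by
        calc b ≤ |b| := le_abs_self b
        _ = Real.sqrt (b ^ 2) := (Real.sqrt_sq_eq_abs b).symm
        _ ≤ Real.sqrt a := Real.sqrt_le_sqrt ha⟩
    have t1 : Tendsto (fun s : ℝ => 3 / (ℓ * Real.sqrt s)) atTop (𝓝 0) :=
      tendsto_const_nhds.div_atTop (hsqrt.const_mul_atTop hℓ)
    have t2 : Tendsto (fun s : ℝ => 3 / (ℓ ^ 2 * s)) atTop (𝓝 0) :=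
      tendsto_const_nhds.div_atTop (tendsto_id.const_mul_atTop (by positivity))
    have h3 : Tendsto (fun s : ℝ => 1 + 3 / (ℓ * Real.sqrt s) + 3 / (ℓ ^ 2 * s))
        atTop (𝓝 (1 + 0 + 0)) :=
      ((tendsto_const_nhds (x := (1:ℝ))).add t1).add t2
    simpa using h3
  apply hnice.congr'
  filter_upwards [eventually_gt_atTop 0] with s hs0
  obtain ⟨σ, hσ, rfl⟩ : ∃ σ, 0 < σ ∧ σ ^ 2 = s :=
    ⟨Real.sqrt s, Real.sqrt_pos.mpr hs0, Real.sq_sqrt hs0.le⟩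
  have hint : (∫ t in Set.Ioi (0 : ℝ),
      Real.exp (-σ ^ 2 * t) *
        (4 / (Real.sqrt Real.pi * ℓ ^ 2) * t ^ ((3 : ℝ) / 2) *
          Real.exp (-ℓ ^ 2 / (4 * t))))
      = (4 / (Real.sqrt Real.pi * ℓ ^ 2)) *
        ∫ t in Ioi (0:ℝ), t * Real.sqrt t * Real.exp (-σ ^ 2 * t - (ℓ ^ 2 / 4) / t) := by
    rw [← integral_const_mul]
    apply setIntegral_congr_fun measurableSet_Ioi
    intro t ht
    have ht0 : (0:ℝ) < t := ht
    have h32 : t ^ ((3:ℝ)/2) = t * Real.sqrt t := by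
      rw [show ((3:ℝ)/2) = 1 + 1/2 by norm_num, Real.rpow_add ht0, Real.rpow_one,
        ← Real.sqrt_eq_rpow]
    have harg : -σ ^ 2 * t - (ℓ ^ 2 / 4) / t = (-σ ^ 2 * t) + (-ℓ ^ 2 / (4 * t)) := by
      field_simp
      ring
    simp only [harg, Real.exp_add, h32]
    ring
  rw [hint, J3_eval hs0 hc]
  have hsqs : Real.sqrt (σ ^ 2) = σ := Real.sqrt_sq hσ.le
  have hsqc : Real.sqrt (ℓ ^ 2 / 4) = ℓ / 2 := by
    rw [show ℓ ^ 2 / 4 = (ℓ/2) ^ 2 by ring, Real.sqrt_sq (by positivity)]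
  have hrpow : ((σ ^ 2 : ℝ)) ^ (-(3:ℝ)/2) = (σ ^ 3)⁻¹ := by
    rw [← Real.rpow_natCast σ 2, ← Real.rpow_mul hσ.le]
    norm_num
  rw [hsqs, hsqc, hrpow]
  have hexp : Real.exp (-(2 * (σ * (ℓ / 2)))) = Real.exp (-σ * ℓ) := by
    congr 1; ring
  rw [hexp]
  have hπ : Real.sqrt Real.pi ≠ 0 := ne_of_gt (Real.sqrt_pos.mpr Real.pi_pos)
  have hσne : σ ≠ 0 := ne_of_gt hσ
  have hℓne : ℓ ≠ 0 := ne_of_gt hℓ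
  have hexpne : Real.exp (-σ * ℓ) ≠ 0 := Real.exp_ne_zero _
  field_simp
  ring
end
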